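/- Let N : ℝ → ℝ be differentiable, q : ℝ → ℝ differentiable with q'(s) = N(q(s)) for all s, let C₂ < 0 and ε ∈ {1, −1}. Suppose σ, ρ : ℝ → ℝ are differentiable on an open interval I and satisfy, for all t ∈ I: N(q(σ(t))) > 0, −1 − C₂·N(q(σ(t))) > 0, σ'(t) = ε·√(−1 − C₂·N(q(σ(t))))/N(q(σ(t))), and ρ'(t) = 1/N(q(σ(t))). Then σ and ρ are twice differentiable on I and (σ, ρ) satisfies the extremal equations σ'' = (1/2)·N'(q(σ))·(ρ'² − σ'²) and ρ'' = −N'(q(σ))·σ'·ρ'. (These are the extremals of general type with canonical parameter fixed by ρ' = 1/N.) -/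

import Mathlib

/-- Extremals of general type: if `σ' = ε·√(-1 - C₂·N(q(σ)))/N(q(σ))` and
`ρ' = 1/N(q(σ))` on an open interval `I` (with `C₂ < 0`, `ε = ±1`,
`N(q(σ)) > 0` and `-1 - C₂·N(q(σ)) > 0` on `I`), then `σ` and `ρ` are twice
differentiable on `I` and `(σ, ρ)` satisfies the extremal equations of the
metric `ds² = -N(q)(dσ² + dρ²)`. -/
theorem general_type_curves_are_extremals
    (N q σ ρ : ℝ → ℝ)
    (hN : Differentiable ℝ N)
    (hq : Differentiable ℝ q) (hq' : ∀ s, deriv q s = N (q s))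
    (C₂ : ℝ) (hC₂ : C₂ < 0) (ε : ℝ) (hε : ε = 1 ∨ ε = -1)
    (I : Set ℝ) (hIopen : IsOpen I) (hIconn : IsPreconnected I)
    (hσ : ∀ t ∈ I, DifferentiableAt ℝ σ t)
    (hρ : ∀ t ∈ I, DifferentiableAt ℝ ρ t)
    (hNpos : ∀ t ∈ I, 0 < N (q (σ t)))
    (hroot : ∀ t ∈ I, 0 < -1 - C₂ * N (q (σ t)))
    (hσ' : ∀ t ∈ I, deriv σ t
      = ε * Real.sqrt (-1 - C₂ * N (q (σ t))) / N (q (σ t)))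
    (hρ' : ∀ t ∈ I, deriv ρ t = 1 / N (q (σ t))) :
    (∀ t ∈ I, DifferentiableAt ℝ (deriv σ) t ∧ DifferentiableAt ℝ (deriv ρ) t) ∧
    (∀ t ∈ I,
      deriv (deriv σ) t
        = (1 / 2) * deriv N (q (σ t)) * ((deriv ρ t) ^ 2 - (deriv σ t) ^ 2) ∧
      deriv (deriv ρ) t
        = -(deriv N (q (σ t)) * deriv σ t * deriv ρ t)) := by
  have hε2 : ε ^ 2 = 1 := by rcases hε with h | h <;> simp [h]
  have main : ∀ t ∈ I,
      (DifferentiableAt ℝ (deriv σ) t ∧ DifferentiableAt ℝ (deriv ρ) t) ∧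
      (deriv (deriv σ) t
        = (1 / 2) * deriv N (q (σ t)) * ((deriv ρ t) ^ 2 - (deriv σ t) ^ 2) ∧
      deriv (deriv ρ) t
        = -(deriv N (q (σ t)) * deriv σ t * deriv ρ t)) := by
    intro t ht
    have hFt : (0:ℝ) < N (q (σ t)) := hNpos t ht
    have hGt : (0:ℝ) < -1 - C₂ * N (q (σ t)) := hroot t ht
    have hFne : N (q (σ t)) ≠ 0 := ne_of_gt hFt
    have hSpos : (0:ℝ) < Real.sqrt (-1 - C₂ * N (q (σ t))) := Real.sqrt_pos.mpr hGt
    have hSne : Real.sqrt (-1 - C₂ * N (q (σ t))) ≠ 0 := ne_of_gt hSpos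
    have hS2 : Real.sqrt (-1 - C₂ * N (q (σ t))) ^ 2 = -1 - C₂ * N (q (σ t)) :=
      Real.sq_sqrt hGt.le
    have hσd := (hσ t ht).hasDerivAt
    have hqd : HasDerivAt q (N (q (σ t))) (σ t) := by
      have h := (hq (σ t)).hasDerivAt
      rwa [hq' (σ t)] at h
    have hFd : HasDerivAt (fun s => N (q (σ s)))
        (deriv N (q (σ t)) * (N (q (σ t)) * deriv σ t)) t := by
      have h1 : HasDerivAt (fun s => q (σ s)) (N (q (σ t)) * deriv σ t) t :=
        hqd.comp t hσd
      exact ((hN (q (σ t))).hasDerivAt.comp t h1)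
    have hGd : HasDerivAt (fun s => -1 - C₂ * N (q (σ s)))
        (-(C₂ * (deriv N (q (σ t)) * (N (q (σ t)) * deriv σ t)))) t :=
      (hFd.const_mul C₂).const_sub (-1)
    have hSd : HasDerivAt (fun s => Real.sqrt (-1 - C₂ * N (q (σ s))))
        ((-(C₂ * (deriv N (q (σ t)) * (N (q (σ t)) * deriv σ t))))
          / (2 * Real.sqrt (-1 - C₂ * N (q (σ t))))) t :=
      hGd.sqrt (ne_of_gt hGt)
    have hgd : HasDerivAt (fun s => ε * Real.sqrt (-1 - C₂ * N (q (σ s))) / N (q (σ s)))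
        ((ε * ((-(C₂ * (deriv N (q (σ t)) * (N (q (σ t)) * deriv σ t))))
            / (2 * Real.sqrt (-1 - C₂ * N (q (σ t))))) * N (q (σ t))
          - ε * Real.sqrt (-1 - C₂ * N (q (σ t)))
            * (deriv N (q (σ t)) * (N (q (σ t)) * deriv σ t)))
          / N (q (σ t)) ^ 2) t :=
      (hSd.const_mul ε).div hFd hFne
    have hrd : HasDerivAt (fun s => 1 / N (q (σ s)))
        ((0 * N (q (σ t)) - 1 * (deriv N (q (σ t)) * (N (q (σ t)) * deriv σ t)))
          / N (q (σ t)) ^ 2) t :=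
      (hasDerivAt_const t (1:ℝ)).div hFd hFne
    have heqσ : deriv σ =ᶠ[nhds t]
        fun s => ε * Real.sqrt (-1 - C₂ * N (q (σ s))) / N (q (σ s)) := by
      filter_upwards [hIopen.mem_nhds ht] with s hs using hσ' s hs
    have heqρ : deriv ρ =ᶠ[nhds t] fun s => 1 / N (q (σ s)) := by
      filter_upwards [hIopen.mem_nhds ht] with s hs using hρ' s hs
    refine ⟨⟨hgd.differentiableAt.congr_of_eventuallyEq heqσ,
      hrd.differentiableAt.congr_of_eventuallyEq heqρ⟩, ?_, ?_⟩
    · rw [heqσ.deriv_eq, hgd.deriv, hρ' t ht, hσ' t ht]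
      field_simp
      linear_combination (-ε ^ 2 * deriv N (q (σ t))) * hS2
        + (deriv N (q (σ t))) * hε2
    · rw [heqρ.deriv_eq, hrd.deriv, hρ' t ht, hσ' t ht]
      field_simp
      ring
  exact ⟨fun t ht => (main t ht).1, fun t ht => (main t ht).2⟩
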